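/- Let n ≥ 1 and let a₁, …, a_{2n+2} be complex numbers that are pairwise distinct, with a_ℓ² ≠ a_k² for ℓ ≠ k and a_ℓ + a_k ≠ 0 for all ℓ < k. Then (−1)^{n(n−1)/2} · Σ_{S ⊆ {1,…,2n+2}, |S| = n} [ (∏_{j∈S} a_j) / (∏_{j∈S} ∏_{ℓ∉S} (a_ℓ² − a_j²)) ] = (−1)^n · (Σ_{ℓ=1}^{2n+2} a_ℓ) / ∏_{1 ≤ ℓ < k ≤ 2n+2} (a_ℓ + a_k). -/

import Mathlib

open Finset Matrix Polynomial Equiv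

section Shuffle

variable {m p q : ℕ}

lemma elim_emb_bijective (S : Finset (Fin m)) (hS : S.card = p) (hSc : Sᶜ.card = q) :
    Function.Bijective (Sum.elim (S.orderEmbOfFin hS) ((Sᶜ : Finset (Fin m)).orderEmbOfFin hSc)) := by
  rw [Fintype.bijective_iff_injective_and_card]
  constructor
  · intro x y hxy
    have hmemS : ∀ i, S.orderEmbOfFin hS i ∈ S := fun i => Finset.orderEmbOfFin_mem _ _ _
    have hmemC : ∀ i, (Sᶜ : Finset (Fin m)).orderEmbOfFin hSc i ∈ Sᶜ := fun i =>
      Finset.orderEmbOfFin_mem _ _ _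
    cases x with
    | inl i => cases y with
      | inl j =>
        simp only [Sum.elim_inl] at hxy
        exact congrArg Sum.inl ((S.orderEmbOfFin hS).injective hxy)
      | inr j =>
        exfalso
        simp only [Sum.elim_inl, Sum.elim_inr] at hxy
        have := hmemC j
        rw [← hxy] at this
        exact (Finset.mem_compl.mp this) (hmemS i)
    | inr i => cases y with
      | inl j =>
        exfalso
        simp only [Sum.elim_inl, Sum.elim_inr] at hxy
        have := hmemC i
        rw [hxy] at this
        exact (Finset.mem_compl.mp this) (hmemS j)
      | inr j =>
        simp only [Sum.elim_inr] at hxy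
        exact congrArg Sum.inr (((Sᶜ : Finset (Fin m)).orderEmbOfFin hSc).injective hxy)
  · simp only [Fintype.card_sum, Fintype.card_fin]
    have := Finset.card_add_card_compl S
    rw [hS, hSc] at this
    simpa using this

/-- The permutation of `Fin m` determined by a subset `S` (with card `p`) and a reference
block-structure equiv `e`. -/
noncomputable def shuffle (e : Fin p ⊕ Fin q ≃ Fin m) (S : Finset (Fin m)) (hS : S.card = p)
    (hSc : Sᶜ.card = q) : Equiv.Perm (Fin m) :=
  e.symm.trans (Equiv.ofBijective _ (elim_emb_bijective S hS hSc))

@[simp] lemma shuffle_apply_inl (e : Fin p ⊕ Fin q ≃ Fin m) (S : Finset (Fin m))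
    (hS : S.card = p) (hSc : Sᶜ.card = q) (i : Fin p) :
    shuffle e S hS hSc (e (Sum.inl i)) = S.orderEmbOfFin hS i := by
  simp [shuffle]

@[simp] lemma shuffle_apply_inr (e : Fin p ⊕ Fin q ≃ Fin m) (S : Finset (Fin m))
    (hS : S.card = p) (hSc : Sᶜ.card = q) (i : Fin q) :
    shuffle e S hS hSc (e (Sum.inr i)) = (Sᶜ : Finset (Fin m)).orderEmbOfFin hSc i := by
  simp [shuffle]

end Shuffle

section Laplace

variable {R : Type*} [CommRing R] {m p q : ℕ}

/-- Summand of the Laplace expansion. -/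
noncomputable def lapTerm (e : Fin p ⊕ Fin q ≃ Fin m) (M : Matrix (Fin m) (Fin m) R)
    (S : Finset (Fin m)) : R :=
  if h : S.card = p ∧ Sᶜ.card = q then
    ((Equiv.Perm.sign (shuffle e S h.1 h.2) : ℤ) : R) *
      ((Matrix.of fun (i : Fin p) (j : Fin p) => M (S.orderEmbOfFin h.1 i) (e (Sum.inl j))).det *
       (Matrix.of fun (i : Fin q) (j : Fin q) =>
          M ((Sᶜ : Finset (Fin m)).orderEmbOfFin h.2 i) (e (Sum.inr j))).det)
  else 0

theorem det_eq_sum_lapTerm (hm : p + q = m) (e : Fin p ⊕ Fin q ≃ Fin m)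
    (M : Matrix (Fin m) (Fin m) R) :
    M.det = ∑ S ∈ powersetCard p (univ : Finset (Fin m)), lapTerm e M S := by
  classical
  -- index type for the bijection
  set I := (Σ _ : {S : Finset (Fin m) // S.card = p}, Equiv.Perm (Fin p) × Equiv.Perm (Fin q))
    with hI
  have hcompl : ∀ S : Finset (Fin m), S.card = p → Sᶜ.card = q := by
    intro S hS
    rw [Finset.card_compl, hS, Fintype.card_fin, ← hm]
    omega
  -- the bijection from I to permutations
  set Φ : I → Equiv.Perm (Fin m) := fun x =>
    shuffle e x.1.1 x.1.2 (hcompl _ x.1.2) * e.permCongr (Equiv.sumCongr x.2.1 x.2.2) with hΦ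
  have hΦapply_inl : ∀ (x : I) (i : Fin p),
      Φ x (e (Sum.inl i)) = x.1.1.orderEmbOfFin x.1.2 (x.2.1 i) := by
    intro x i
    simp [hΦ, Equiv.Perm.mul_apply, Equiv.permCongr_apply]
  have hΦapply_inr : ∀ (x : I) (i : Fin q),
      Φ x (e (Sum.inr i)) = (x.1.1ᶜ : Finset (Fin m)).orderEmbOfFin (hcompl _ x.1.2) (x.2.2 i) := by
    intro x i
    simp [hΦ, Equiv.Perm.mul_apply, Equiv.permCongr_apply]
  -- surjectivity helper
  have hsurjS : ∀ (S : Finset (Fin m)) (hS : S.card = p) (x : Fin m), x ∈ S →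
      ∃ i, S.orderEmbOfFin hS i = x := by
    intro S hS x hx
    have : x ∈ Set.range (S.orderEmbOfFin hS) := by
      rw [Finset.range_orderEmbOfFin]; exact hx
    exact this
  have hΦbij : Function.Bijective Φ := by
    constructor
    · rintro ⟨⟨S, hS⟩, τ, υ⟩ ⟨⟨S', hS'⟩, τ', υ'⟩ h
      have hSS' : S = S' := by
        apply Finset.eq_of_subset_of_card_le
        · intro x hx
          obtain ⟨i, hi⟩ := hsurjS S hS x hx
          have := congrArg (fun σ : Equiv.Perm (Fin m) => σ (e (Sum.inl (τ⁻¹ i)))) h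
          rw [hΦapply_inl ⟨⟨S, hS⟩, τ, υ⟩, hΦapply_inl ⟨⟨S', hS'⟩, τ', υ'⟩] at this
          simp only [Equiv.Perm.inv_def, Equiv.apply_symm_apply] at this
          rw [hi] at this
          rw [this]
          exact Finset.orderEmbOfFin_mem _ _ _
        · rw [hS, hS']
      subst hSS'
      have hττ' : τ = τ' ∧ υ = υ' := by
        constructor
        · ext i
          have := congrArg (fun σ : Equiv.Perm (Fin m) => σ (e (Sum.inl i))) h
          rw [hΦapply_inl ⟨⟨S, hS⟩, τ, υ⟩, hΦapply_inl ⟨⟨S, hS'⟩, τ', υ'⟩] at this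
          have := (S.orderEmbOfFin hS).injective (by
            convert this using 2)
          exact congrArg Fin.val this
        · ext i
          have := congrArg (fun σ : Equiv.Perm (Fin m) => σ (e (Sum.inr i))) h
          rw [hΦapply_inr ⟨⟨S, hS⟩, τ, υ⟩, hΦapply_inr ⟨⟨S, hS'⟩, τ', υ'⟩] at this
          have := ((Sᶜ : Finset (Fin m)).orderEmbOfFin (hcompl _ hS)).injective (by
            convert this using 2)
          exact congrArg Fin.val this
      rcases hττ' with ⟨h1, h2⟩
      subst h1; subst h2
      rfl
    · intro σ
      set S : Finset (Fin m) := Finset.image (fun i => σ (e (Sum.inl i))) univ with hSdef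
      have hinj : Function.Injective (fun i : Fin p => σ (e (Sum.inl i))) := by
        intro x y hxy
        have := e.injective (σ.injective hxy)
        exact Sum.inl_injective this
      have hS : S.card = p := by
        rw [hSdef, Finset.card_image_of_injective _ hinj, Finset.card_univ, Fintype.card_fin]
      have hmemC : ∀ j : Fin q, σ (e (Sum.inr j)) ∈ Sᶜ := by
        intro j
        rw [Finset.mem_compl]
        intro hmem
        rw [hSdef, Finset.mem_image] at hmem
        obtain ⟨i, _, hi⟩ := hmem
        have := e.injective (σ.injective hi)
        cases this
      -- define τ and υ
      set t : Fin p → Fin p := fun i => (S.orderIsoOfFin hS).symm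
        ⟨σ (e (Sum.inl i)), by rw [hSdef]; exact Finset.mem_image_of_mem _ (Finset.mem_univ i)⟩
        with htdef
      have htinj : Function.Injective t := by
        intro x y hxy
        apply hinj
        have := congrArg (fun z => ((S.orderIsoOfFin hS) z : Fin m)) hxy
        simpa [htdef] using this
      set u : Fin q → Fin q := fun j => ((Sᶜ : Finset (Fin m)).orderIsoOfFin (hcompl _ hS)).symm
        ⟨σ (e (Sum.inr j)), hmemC j⟩ with hudef
      have huinj : Function.Injective u := by
        intro x y hxy
        apply fun h => Sum.inr_injective (e.injective (σ.injective h))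
        have := congrArg (fun z => (((Sᶜ : Finset (Fin m)).orderIsoOfFin (hcompl _ hS)) z
          : Fin m)) hxy
        simpa [hudef] using this
      refine ⟨⟨⟨S, hS⟩, Equiv.ofBijective t (Finite.injective_iff_bijective.mp htinj),
        Equiv.ofBijective u (Finite.injective_iff_bijective.mp huinj)⟩, ?_⟩
      ext x
      obtain ⟨y, rfl⟩ := e.surjective x
      cases y with
      | inl i =>
        rw [hΦapply_inl]
        simp only [Equiv.ofBijective_apply, htdef]
        rw [← Finset.coe_orderIsoOfFin_apply]
        simp
      | inr j =>
        rw [hΦapply_inr]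
        simp only [Equiv.ofBijective_apply, hudef]
        rw [← Finset.coe_orderIsoOfFin_apply]
        simp
  -- now the main computation
  rw [Matrix.det_apply']
  rw [← Fintype.sum_bijective Φ hΦbij _ _ (fun x => rfl)]
  rw [← Finset.univ_sigma_univ, Finset.sum_sigma]
  rw [← Finset.sum_attach (powersetCard p (univ : Finset (Fin m))) (lapTerm e M)]
  have hequiv : ∀ S : {S : Finset (Fin m) // S.card = p},
      (∑ x : Equiv.Perm (Fin p) × Equiv.Perm (Fin q),
        ((Equiv.Perm.sign (Φ ⟨S, x⟩) : ℤ) : R) * ∏ i, M (Φ ⟨S, x⟩ i) i) = lapTerm e M S.1 := by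
    rintro ⟨S, hS⟩
    rw [lapTerm, dif_pos ⟨hS, hcompl _ hS⟩]
    conv_rhs => rw [Matrix.det_apply', Matrix.det_apply', Finset.sum_mul_sum]
    simp only [Finset.mul_sum]
    rw [Fintype.sum_prod_type]
    apply Finset.sum_congr rfl
    intro τ _
    apply Finset.sum_congr rfl
    intro υ _
    have hsign : Equiv.Perm.sign (Φ ⟨⟨S, hS⟩, τ, υ⟩) =
        Equiv.Perm.sign (shuffle e S hS (hcompl _ hS)) * (Equiv.Perm.sign τ *
          Equiv.Perm.sign υ) := by
      rw [hΦ]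
      simp only [Equiv.Perm.sign_mul, Equiv.Perm.sign_permCongr, Equiv.Perm.sign_sumCongr]
    have hprod : (∏ i, M (Φ ⟨⟨S, hS⟩, τ, υ⟩ i) i) =
        (∏ i : Fin p, M (S.orderEmbOfFin hS (τ i)) (e (Sum.inl i))) *
        ∏ i : Fin q, M ((Sᶜ : Finset (Fin m)).orderEmbOfFin (hcompl _ hS) (υ i))
          (e (Sum.inr i)) := by
      rw [← Equiv.prod_comp e (fun i => M (Φ ⟨⟨S, hS⟩, τ, υ⟩ i) i)]
      rw [Fintype.prod_sum_type]
      congr 1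
      · exact Finset.prod_congr rfl fun i _ => by rw [hΦapply_inl ⟨⟨S, hS⟩, τ, υ⟩]
      · exact Finset.prod_congr rfl fun i _ => by rw [hΦapply_inr ⟨⟨S, hS⟩, τ, υ⟩]
    rw [hsign, hprod]
    simp only [Matrix.of_apply]
    push_cast
    ring
  rw [show (powersetCard p (univ : Finset (Fin m))).attach = (univ : Finset _) from rfl]
  -- match the two subtype index types
  have : ∀ (f : {S : Finset (Fin m) // S.card = p} → R)
      (g : {S // S ∈ powersetCard p (univ : Finset (Fin m))} → R),
      (∀ S h, f ⟨S, h⟩ = g ⟨S, by rw [Finset.mem_powersetCard_univ]; exact h⟩) →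
      ∑ S, f S = ∑ S, g S := by
    intro f g hfg
    apply Fintype.sum_bijective (fun S => ⟨S.1, by rw [Finset.mem_powersetCard_univ]; exact S.2⟩)
    · constructor
      · rintro ⟨S, hS⟩ ⟨S', hS'⟩ h
        simpa using congrArg Subtype.val h
      · rintro ⟨S, hS⟩
        exact ⟨⟨S, Finset.mem_powersetCard_univ.mp hS⟩, rfl⟩
    · rintro ⟨S, hS⟩
      exact hfg S hS
  apply this
  intro S h
  exact hequiv ⟨S, h⟩

end Laplace


section Vandermonde

variable {R : Type*} [CommRing R]

lemma det_odd_vandermonde {k : ℕ} (b : Fin k → R) :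
    (Matrix.of fun i j : Fin k => b i ^ (2 * (j : ℕ) + 1)).det =
      (∏ i, b i) * ∏ i, ∏ j ∈ Ioi i, (b j ^ 2 - b i ^ 2) := by
  have h : (Matrix.of fun i j : Fin k => b i ^ (2 * (j : ℕ) + 1)) =
      Matrix.of fun i j : Fin k => b i * (Matrix.vandermonde fun i => b i ^ 2) i j := by
    ext i j
    simp only [Matrix.of_apply, Matrix.vandermonde_apply]
    rw [← pow_mul, ← pow_succ']
  rw [h, Matrix.det_mul_column, Matrix.det_vandermonde]

lemma det_even_vandermonde {k : ℕ} (b : Fin k → R) :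
    (Matrix.of fun i j : Fin k => b i ^ (2 * (j : ℕ))).det =
      ∏ i, ∏ j ∈ Ioi i, (b j ^ 2 - b i ^ 2) := by
  have h : (Matrix.of fun i j : Fin k => b i ^ (2 * (j : ℕ))) =
      Matrix.vandermonde fun i => b i ^ 2 := by
    ext i j
    simp only [Matrix.of_apply, Matrix.vandermonde_apply]
    rw [← pow_mul]
  rw [h, Matrix.det_vandermonde]

/-- Generalized Vandermonde determinant with exponents `0, 1, …, k-1, k+1`. -/
lemma det_missing_power {k : ℕ} (w : Fin (k + 1) → ℂ) :
    (Matrix.of fun (i : Fin (k + 1)) (d : Fin (k + 1)) =>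
        w i ^ (if (d : ℕ) = k then k + 1 else (d : ℕ))).det =
      (∑ i, w i) * ∏ i, ∏ j ∈ Ioi i, (w j - w i) := by
  set Δ := ∏ i, ∏ j ∈ Ioi i, (w j - w i) with hΔ
  set D : Fin (k + 2) → ℂ := fun j =>
    (Matrix.of fun (i : Fin (k + 1)) (k' : Fin (k + 1)) =>
      w i ^ ((j.succAbove k' : ℕ))).det with hD
  have key : ∀ x : ℂ, (∏ i, (w i - x)) * Δ =
      ∑ j : Fin (k + 2), (-1) ^ (j : ℕ) * x ^ (j : ℕ) * D j := by
    intro x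
    have h1 : (Matrix.vandermonde (Fin.cons x w)).det = (∏ i, (w i - x)) * Δ := by
      rw [Matrix.det_vandermonde, Fin.prod_univ_succ]
      simp only [Fin.prod_Ioi_zero, Fin.prod_Ioi_succ, Fin.cons_succ, Fin.cons_zero]
      rw [hΔ]
    have h2 : (Matrix.vandermonde (Fin.cons x w)).det =
        ∑ j : Fin (k + 2), (-1) ^ (j : ℕ) * x ^ (j : ℕ) * D j := by
      rw [Matrix.det_succ_row_zero]
      apply Finset.sum_congr rfl
      intro j _
      have hrow : Matrix.vandermonde (Fin.cons x w) 0 j = x ^ (j : ℕ) := by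
        simp [Matrix.vandermonde_apply]
      have hsub : ((Matrix.vandermonde (Fin.cons x w)).submatrix Fin.succ j.succAbove) =
          Matrix.of fun (i : Fin (k + 1)) (k' : Fin (k + 1)) =>
            w i ^ ((j.succAbove k' : ℕ)) := by
        ext i k'
        simp only [Matrix.submatrix_apply, Matrix.vandermonde_apply, Matrix.of_apply,
          Fin.cons_succ]
      rw [hrow, hsub]
    rw [← h1, h2]
  -- polynomial identity
  set P : Polynomial ℂ := (∏ i, (C (w i) - X)) * C Δ with hP
  set Q : Polynomial ℂ := ∑ j : Fin (k + 2), C ((-1) ^ (j : ℕ) * D j) * X ^ (j : ℕ) with hQ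
  have hPQ : P = Q := by
    apply Polynomial.funext
    intro x
    rw [hP, hQ]
    simp only [eval_mul, eval_prod, eval_sub, eval_C, eval_X, eval_finset_sum, eval_pow]
    rw [key x]
    apply Finset.sum_congr rfl
    intro j _
    ring
  have hcoeffQ : Q.coeff k = (-1) ^ k * D ⟨k, by omega⟩ := by
    rw [hQ, Polynomial.finset_sum_coeff]
    rw [Finset.sum_eq_single (⟨k, by omega⟩ : Fin (k + 2))]
    · rw [Polynomial.coeff_C_mul, Polynomial.coeff_X_pow]
      simp
    · intro j _ hj
      rw [Polynomial.coeff_C_mul, Polynomial.coeff_X_pow,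
        if_neg (fun hk => hj (Fin.val_injective hk.symm)), mul_zero]
    · intro h
      exact absurd (Finset.mem_univ _) h
  have hcoeffP : P.coeff k = (-1) ^ k * ((∑ i, w i) * Δ) := by
    have hB : (∏ i : Fin (k + 1), (X - C (w i))).coeff k = -(∑ i, w i) := by
      have hdeg : (∏ i : Fin (k + 1), (X - C (w i))).natDegree = k + 1 := by
        rw [Polynomial.natDegree_prod _ _ fun i _ => (monic_X_sub_C (w i)).ne_zero]
        simp [Polynomial.natDegree_X_sub_C]
      have := Polynomial.prod_X_sub_C_nextCoeff (s := (univ : Finset (Fin (k + 1)))) w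
      rwa [Polynomial.nextCoeff_of_natDegree_pos (by omega), hdeg] at this
    have hneg : (∏ i : Fin (k + 1), (C (w i) - X)) =
        C ((-1) ^ (k + 1)) * ∏ i : Fin (k + 1), (X - C (w i)) := by
      have h0 : ∀ i : Fin (k + 1), C (w i) - X = C (-1) * (X - C (w i)) := fun i => by
        rw [map_neg, Polynomial.C_1]; ring
      rw [Finset.prod_congr rfl fun i _ => h0 i, Finset.prod_mul_distrib]
      rw [Finset.prod_const, Finset.card_univ, Fintype.card_fin, ← map_pow]
    rw [hP, Polynomial.coeff_mul_C, hneg, Polynomial.coeff_C_mul, hB, pow_succ]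
    ring
  have hDk : D ⟨k, by omega⟩ = (∑ i, w i) * Δ := by
    have h1 : ((-1 : ℂ)) ^ k * ((∑ i, w i) * Δ) = (-1) ^ k * D ⟨k, by omega⟩ := by
      rw [← hcoeffP, hPQ, hcoeffQ]
    have hne : ((-1 : ℂ)) ^ k ≠ 0 := pow_ne_zero _ (by norm_num)
    exact (mul_left_cancel₀ hne h1).symm
  have hexp : ∀ k' : Fin (k + 1),
      (((⟨k, by omega⟩ : Fin (k + 2)).succAbove k' : Fin (k + 2)) : ℕ) =
        if (k' : ℕ) = k then k + 1 else (k' : ℕ) := by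
    intro k'
    rcases Nat.lt_or_ge (k' : ℕ) k with h | h
    · rw [Fin.succAbove_of_castSucc_lt _ _ (by simp [Fin.lt_def]; omega), if_neg (by omega)]
      simp
    · have hk' : (k' : ℕ) = k := by have := k'.isLt; omega
      rw [Fin.succAbove_of_le_castSucc _ _ (by simp [Fin.le_def]; omega), if_pos hk']
      simp [hk']
  rw [← hDk, hD]
  congr 1
  ext i k'
  simp only [Matrix.of_apply]
  rw [hexp k']

end Vandermonde


section InterleaveSign

lemma sign_eq_signAux {k : ℕ} (σ : Equiv.Perm (Fin k)) :
    Equiv.Perm.sign σ = Equiv.Perm.signAux σ := by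
  refine Equiv.Perm.swap_induction_on' σ ?_ ?_
  · simp [Equiv.Perm.signAux_one]
  · intro f x y hxy ih
    rw [Equiv.Perm.signAux_mul, _root_.map_mul, ih, Equiv.Perm.signAux_swap hxy,
      Equiv.Perm.sign_swap hxy]

lemma prod_ite_neg_one {α : Type*} [DecidableEq α] (s : Finset α) (P : α → Prop)
    [DecidablePred P] :
    (∏ b ∈ s, if P b then (-1 : ℤˣ) else 1) = (-1) ^ (s.filter P).card := by
  rw [Finset.prod_ite, Finset.prod_const, Finset.prod_const, one_pow, mul_one]

/-- The column interleaving permutation: `j ↦ 2j+1` for `j < n`, `n+k ↦ 2k` for `k ≤ n`,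
`2n+1 ↦ 2n+1`. -/
noncomputable def interleavePerm (n : ℕ) : Equiv.Perm (Fin (2 * n + 2)) :=
  Equiv.ofBijective
    (fun c => (⟨if (c : ℕ) < n then 2 * (c : ℕ) + 1
        else if (c : ℕ) = 2 * n + 1 then 2 * n + 1 else 2 * ((c : ℕ) - n),
      by have := c.isLt; split_ifs <;> omega⟩ : Fin (2 * n + 2)))
    (by
      rw [Fintype.bijective_iff_injective_and_card]
      refine ⟨?_, rfl⟩
      intro x y hxy
      have hx := x.isLt
      have hy := y.isLt
      rw [Fin.mk.injEq] at hxy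
      rw [Fin.ext_iff]
      split_ifs at hxy <;> omega)

lemma interleavePerm_val (n : ℕ) (c : Fin (2 * n + 2)) :
    (interleavePerm n c : ℕ) = if (c : ℕ) < n then 2 * (c : ℕ) + 1
      else if (c : ℕ) = 2 * n + 1 then 2 * n + 1 else 2 * ((c : ℕ) - n) := rfl

lemma sign_interleavePerm (n : ℕ) :
    Equiv.Perm.sign (interleavePerm n) = (-1) ^ (n * (n + 1) / 2) := by
  rw [sign_eq_signAux]
  rw [Equiv.Perm.signAux]
  rw [prod_ite_neg_one]
  congr 1
  -- count the inversions
  have hfilter : ((Equiv.Perm.finPairsLT (2 * n + 2)).filter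
      (fun x => interleavePerm n x.1 ≤ interleavePerm n x.2)).card =
      ∑ a : Fin (2 * n + 2), if n ≤ (a : ℕ) ∧ (a : ℕ) ≤ 2 * n then 2 * n - (a : ℕ) else 0 := by
    rw [Equiv.Perm.finPairsLT]
    have hfs : ((univ.sigma fun a : Fin (2 * n + 2) => (Finset.range (a : ℕ)).attachFin
          fun _ hm => (Finset.mem_range.1 hm).trans a.2).filter
        (fun x => interleavePerm n x.1 ≤ interleavePerm n x.2)) =
        univ.sigma (fun a : Fin (2 * n + 2) => ((Finset.range (a : ℕ)).attachFin
          fun _ hm => (Finset.mem_range.1 hm).trans a.2).filter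
          (fun b => interleavePerm n a ≤ interleavePerm n b)) := by
      ext x
      simp only [Finset.mem_filter, Finset.mem_sigma, Finset.mem_univ, true_and]
    rw [hfs]
    rw [Finset.card_sigma]
    apply Finset.sum_congr rfl
    intro a _
    -- the filtered set over b
    have hset : (((Finset.range (a : ℕ)).attachFin fun _ hm =>
          (Finset.mem_range.1 hm).trans a.2).filter
        (fun b => interleavePerm n a ≤ interleavePerm n b)) =
        (((Finset.range (a : ℕ)).filter (fun v =>
            (if (a : ℕ) < n then 2 * (a : ℕ) + 1
              else if (a : ℕ) = 2 * n + 1 then 2 * n + 1 else 2 * ((a : ℕ) - n)) ≤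
            (if v < n then 2 * v + 1
              else if v = 2 * n + 1 then 2 * n + 1 else 2 * (v - n)))).attachFin
          (fun v hv => by
            rw [Finset.mem_filter, Finset.mem_range] at hv
            exact hv.1.trans a.2)) := by
      ext b
      simp only [Finset.mem_filter, Finset.mem_attachFin, Finset.mem_range, Fin.le_def,
        interleavePerm_val]
      try tauto
    rw [hset, Finset.card_attachFin]
    -- now a pure ℕ computation
    have ha := a.isLt
    rcases Nat.lt_or_ge (a : ℕ) n with h | h
    · conv_rhs => rw [if_neg (show ¬(n ≤ (a : ℕ) ∧ (a : ℕ) ≤ 2 * n) by omega)]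
      rw [Finset.card_eq_zero]
      apply Finset.filter_eq_empty_iff.mpr
      intro v hv
      rw [Finset.mem_range] at hv
      rw [if_pos h, if_pos (by omega)]
      omega
    · rcases Nat.lt_or_ge (a : ℕ) (2 * n + 1) with h2 | h2
      · conv_rhs => rw [if_pos (show n ≤ (a : ℕ) ∧ (a : ℕ) ≤ 2 * n by omega)]
        have : ((Finset.range (a : ℕ)).filter (fun v =>
            (if (a : ℕ) < n then 2 * (a : ℕ) + 1
              else if (a : ℕ) = 2 * n + 1 then 2 * n + 1 else 2 * ((a : ℕ) - n)) ≤
            (if v < n then 2 * v + 1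
              else if v = 2 * n + 1 then 2 * n + 1 else 2 * (v - n)))) =
            Finset.Ico ((a : ℕ) - n) n := by
          ext v
          rw [Finset.mem_filter, Finset.mem_range, Finset.mem_Ico]
          rw [if_neg (by omega), if_neg (by omega)]
          constructor
          · rintro ⟨h3, h4⟩
            split_ifs at h4 <;> omega
          · rintro ⟨h3, h4⟩
            rw [if_pos h4]
            omega
        rw [this, Nat.card_Ico]
        omega
      · have ha2 : (a : ℕ) = 2 * n + 1 := by omega
        conv_rhs => rw [if_neg (show ¬(n ≤ (a : ℕ) ∧ (a : ℕ) ≤ 2 * n) by omega)]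
        rw [Finset.card_eq_zero]
        apply Finset.filter_eq_empty_iff.mpr
        intro v hv
        rw [Finset.mem_range] at hv
        rw [if_neg (show ¬((a : ℕ) < n) by omega), if_pos ha2]
        split_ifs <;> omega
  rw [hfilter]
  rw [Fin.sum_univ_eq_sum_range (fun v => if n ≤ v ∧ v ≤ 2 * n then 2 * n - v else 0)]
  rw [← Finset.sum_filter]
  have : (Finset.range (2 * n + 2)).filter (fun v => n ≤ v ∧ v ≤ 2 * n) =
      Finset.Ico n (2 * n + 1) := by
    ext v
    simp only [Finset.mem_filter, Finset.mem_range, Finset.mem_Ico]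
    omega
  rw [this, Finset.sum_Ico_eq_sum_range]
  have h1 : (∑ k ∈ Finset.range (2 * n + 1 - n), (2 * n - (n + k))) =
      ∑ k ∈ Finset.range (n + 1), (n - k) := by
    apply Finset.sum_congr (by congr 1; omega)
    intro k hk
    omega
  rw [h1]
  have h2 : (∑ k ∈ Finset.range (n + 1), (n - k)) = ∑ k ∈ Finset.range (n + 1), k := by
    rw [← Finset.sum_range_reflect]
    apply Finset.sum_congr rfl
    intro k hk
    rw [Finset.mem_range] at hk
    omega
  rw [h2]
  have h3 := Finset.sum_range_id_mul_two (n + 1)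
  rw [Nat.add_sub_cancel, Nat.mul_comm (n + 1) n] at h3
  omega

end InterleaveSign


section Helpers

variable {M : Type*} [CommMonoid M]

lemma prod_emb {α : Type*} [LinearOrder α] {k : ℕ} (s : Finset α) (h : s.card = k)
    (f : α → M) : (∏ i : Fin k, f (s.orderEmbOfFin h i)) = ∏ x ∈ s, f x := by
  calc (∏ i : Fin k, f (s.orderEmbOfFin h i))
      = ∏ i : Fin k, f ((s.orderIsoOfFin h) i : α) := by
        exact Finset.prod_congr rfl fun i _ => by rw [Finset.coe_orderIsoOfFin_apply]
    _ = ∏ x : {x // x ∈ s}, f ↑x := Equiv.prod_comp (s.orderIsoOfFin h).toEquiv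
        (fun x => f ↑x)
    _ = ∏ x ∈ s, f x := by rw [← Finset.prod_attach s f]; rfl

lemma prod_pairs_filter {m : ℕ} (g : Fin m → Fin m → M) :
    (∏ p ∈ (univ : Finset (Fin m × Fin m)).filter (fun p => p.1 < p.2), g p.1 p.2) =
      ∏ i, ∏ j ∈ Ioi i, g i j := by
  rw [Finset.prod_filter, ← Finset.univ_product_univ, Finset.prod_product]
  apply Finset.prod_congr rfl
  intro i _
  rw [← Finset.prod_filter]
  apply Finset.prod_congr _ fun j _ => rfl
  ext j
  simp [Finset.mem_Ioi]

lemma prod_pairs_split {p q m : ℕ} (e : Fin p ⊕ Fin q ≃ Fin m)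
    (hll : ∀ i j : Fin p, e (Sum.inl i) < e (Sum.inl j) ↔ i < j)
    (hrr : ∀ i j : Fin q, e (Sum.inr i) < e (Sum.inr j) ↔ i < j)
    (hlr : ∀ (i : Fin p) (j : Fin q), e (Sum.inl i) < e (Sum.inr j))
    (F : Fin m → Fin m → M) :
    (∏ i, ∏ j ∈ Ioi i, F i j) =
      ((∏ i, ∏ j ∈ Ioi i, F (e (Sum.inl i)) (e (Sum.inl j))) *
       (∏ i, ∏ j ∈ Ioi i, F (e (Sum.inr i)) (e (Sum.inr j)))) *
      ∏ i : Fin p, ∏ j : Fin q, F (e (Sum.inl i)) (e (Sum.inr j)) := by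
  have hIoi : ∀ (k : ℕ) (G : Fin k → Fin k → M) (i : Fin k),
      (∏ j ∈ Ioi i, G i j) = ∏ j, if i < j then G i j else 1 := by
    intro k G i
    rw [← Finset.prod_filter]
    apply Finset.prod_congr _ fun j _ => rfl
    ext j
    simp [Finset.mem_Ioi]
  simp only [hIoi]
  rw [← Equiv.prod_comp e (fun i => ∏ j, if i < j then F i j else 1)]
  rw [Fintype.prod_sum_type]
  have hinner : ∀ u : Fin p ⊕ Fin q,
      (∏ j, if e u < j then F (e u) j else 1) =
        (∏ j : Fin p, if e u < e (Sum.inl j) then F (e u) (e (Sum.inl j)) else 1) *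
        ∏ j : Fin q, if e u < e (Sum.inr j) then F (e u) (e (Sum.inr j)) else 1 := by
    intro u
    rw [← Equiv.prod_comp e (fun j => if e u < j then F (e u) j else 1)]
    rw [Fintype.prod_sum_type]
  simp only [hinner]
  rw [Finset.prod_mul_distrib, Finset.prod_mul_distrib]
  have h1 : (∏ i : Fin p, ∏ j : Fin q, if e (Sum.inl i) < e (Sum.inr j)
      then F (e (Sum.inl i)) (e (Sum.inr j)) else 1) =
      ∏ i : Fin p, ∏ j : Fin q, F (e (Sum.inl i)) (e (Sum.inr j)) :=
    Finset.prod_congr rfl fun i _ => Finset.prod_congr rfl fun j _ => if_pos (hlr i j)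
  have h2 : (∏ i : Fin q, ∏ j : Fin p, if e (Sum.inr i) < e (Sum.inl j)
      then F (e (Sum.inr i)) (e (Sum.inl j)) else 1) = 1 := by
    apply Finset.prod_eq_one
    intro i _
    apply Finset.prod_eq_one
    intro j _
    exact if_neg (fun hc => absurd (hlr j i) (lt_asymm hc))
  have h3 : (∏ i : Fin p, ∏ j : Fin p, if e (Sum.inl i) < e (Sum.inl j)
      then F (e (Sum.inl i)) (e (Sum.inl j)) else 1) =
      ∏ i : Fin p, ∏ j ∈ Ioi i, F (e (Sum.inl i)) (e (Sum.inl j)) := by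
    apply Finset.prod_congr rfl
    intro i _
    rw [hIoi p (fun i j => F (e (Sum.inl i)) (e (Sum.inl j))) i]
    exact Finset.prod_congr rfl fun j _ => if_congr (hll i j) rfl rfl
  have h4 : (∏ i : Fin q, ∏ j : Fin q, if e (Sum.inr i) < e (Sum.inr j)
      then F (e (Sum.inr i)) (e (Sum.inr j)) else 1) =
      ∏ i : Fin q, ∏ j ∈ Ioi i, F (e (Sum.inr i)) (e (Sum.inr j)) := by
    apply Finset.prod_congr rfl
    intro i _
    rw [hIoi q (fun i j => F (e (Sum.inr i)) (e (Sum.inr j))) i]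
    exact Finset.prod_congr rfl fun j _ => if_congr (hrr i j) rfl rfl
  rw [h1, h2, h3, h4, one_mul]
  exact mul_right_comm _ _ _

end Helpers

section PermProd

lemma prod_pairs_perm {R : Type*} [CommRing R] {m : ℕ} (ρ : Equiv.Perm (Fin m))
    (f : Fin m → R) :
    (∏ i, ∏ j ∈ Ioi i, (f (ρ j) - f (ρ i))) =
      ((Equiv.Perm.sign ρ : ℤ) : R) * ∏ i, ∏ j ∈ Ioi i, (f j - f i) := by
  have h1 := Matrix.det_permute ρ (Matrix.vandermonde f)
  have h2 : (Matrix.vandermonde f).submatrix (⇑ρ) id = Matrix.vandermonde (f ∘ ρ) := by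
    ext i j
    simp [Matrix.vandermonde_apply]
  rw [h2, Matrix.det_vandermonde, Matrix.det_vandermonde] at h1
  simpa using h1

end PermProd

open Finset

theorem rational_Cn_beta_subset_identity (n : ℕ) (hn : 1 ≤ n)
    (a : Fin (2 * n + 2) → ℂ)
    (hdist : ∀ ℓ k, ℓ ≠ k → a ℓ ≠ a k)
    (hsq : ∀ ℓ k, ℓ ≠ k → (a ℓ) ^ 2 ≠ (a k) ^ 2)
    (hsum : ∀ ℓ k : Fin (2 * n + 2), ℓ < k → a ℓ + a k ≠ 0) :
    (-1 : ℂ) ^ (n * (n - 1) / 2) *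
      ∑ S ∈ Finset.powersetCard n (Finset.univ : Finset (Fin (2 * n + 2))),
        (∏ j ∈ S, a j) / (∏ j ∈ S, ∏ ℓ ∈ Sᶜ, ((a ℓ) ^ 2 - (a j) ^ 2)) =
    (-1 : ℂ) ^ n * (∑ ℓ, a ℓ) /
      ∏ p ∈ Finset.univ.filter (fun p : Fin (2 * n + 2) × Fin (2 * n + 2) => p.1 < p.2),
        (a p.1 + a p.2) := by
  classical
  have hm : n + (n + 2) = 2 * n + 2 := by ring
  set e₀ : Fin n ⊕ Fin (n + 2) ≃ Fin (2 * n + 2) :=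
    finSumFinEquiv.trans (finCongr hm) with he₀
  have hel : ∀ j : Fin n, ((e₀ (Sum.inl j)) : ℕ) = (j : ℕ) := by
    intro j; simp [he₀, finCongr_apply]
  have her : ∀ k : Fin (n + 2), ((e₀ (Sum.inr k)) : ℕ) = n + (k : ℕ) := by
    intro k; simp [he₀, finCongr_apply]
  set π := interleavePerm n with hπ
  set E : Fin (2 * n + 2) → ℕ :=
    fun c => if ((π c) : ℕ) = 2 * n + 1 then 2 * n + 2 else ((π c) : ℕ) with hE
  set Mm : Matrix (Fin (2 * n + 2)) (Fin (2 * n + 2)) ℂ :=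
    Matrix.of fun i c => a i ^ E c with hMm
  have hEl : ∀ j : Fin n, E (e₀ (Sum.inl j)) = 2 * (j : ℕ) + 1 := by
    intro j
    have hj := j.isLt
    rw [hE]
    simp only
    rw [hπ, interleavePerm_val, hel j]
    split_ifs <;> omega
  have hEr : ∀ k : Fin (n + 2), E (e₀ (Sum.inr k)) = 2 * (k : ℕ) := by
    intro k
    have hk := k.isLt
    rw [hE]
    simp only
    rw [hπ, interleavePerm_val, her k]
    split_ifs <;> omega
  -- determinant of Mm
  set Δ : ℂ := ∏ i, ∏ j ∈ Ioi i, (a j - a i) with hΔ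
  set P2 : ℂ := ∏ i, ∏ j ∈ Ioi i, (a j + a i) with hP2
  set Δf : ℂ := ∏ i, ∏ j ∈ Ioi i, ((a j) ^ 2 - (a i) ^ 2) with hΔf
  have hΔf_split : Δf = Δ * P2 := by
    rw [hΔf, hΔ, hP2, ← Finset.prod_mul_distrib]
    apply Finset.prod_congr rfl; intro i _
    rw [← Finset.prod_mul_distrib]
    apply Finset.prod_congr rfl; intro j _
    ring
  have hΔ_ne : Δ ≠ 0 := by
    rw [hΔ, Finset.prod_ne_zero_iff]
    intro i _
    rw [Finset.prod_ne_zero_iff]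
    intro j hj
    exact sub_ne_zero_of_ne (hdist j i (Finset.mem_Ioi.mp hj).ne')
  have hP2_ne : P2 ≠ 0 := by
    rw [hP2, Finset.prod_ne_zero_iff]
    intro i _
    rw [Finset.prod_ne_zero_iff]
    intro j hj
    intro h0
    exact hsum i j (Finset.mem_Ioi.mp hj) (by rw [add_comm]; exact h0)
  have hΔf_ne : Δf ≠ 0 := by rw [hΔf_split]; exact mul_ne_zero hΔ_ne hP2_ne
  set B := n * (n + 1) / 2 with hB
  have hNdet : Mm.det = ((-1 : ℂ)) ^ B * ((∑ i, a i) * Δ) := by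
    have hdetN : (Matrix.of fun (i : Fin (2 * n + 2)) (d : Fin (2 * n + 2)) =>
        a i ^ (if (d : ℕ) = 2 * n + 1 then 2 * n + 2 else (d : ℕ))).det =
        (∑ i, a i) * Δ := det_missing_power (k := 2 * n + 1) a
    have hMN : Mm = (Matrix.of fun (i : Fin (2 * n + 2)) (d : Fin (2 * n + 2)) =>
        a i ^ (if (d : ℕ) = 2 * n + 1 then 2 * n + 2 else (d : ℕ))).submatrix id π := by
      ext i c
      simp [hMm, hE, Matrix.submatrix_apply]
    have hsignπ : ((Equiv.Perm.sign π : ℤ) : ℂ) = (-1 : ℂ) ^ B := by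
      rw [hπ, sign_interleavePerm, hB]
      push_cast
      rfl
    rw [hMN, Matrix.det_permute', hdetN, hsignπ]
  -- Laplace expansion
  have hlap := det_eq_sum_lapTerm hm e₀ Mm
  -- per-subset identity
  have hterm : ∀ S ∈ powersetCard n (univ : Finset (Fin (2 * n + 2))),
      ((∏ j ∈ S, a j) / (∏ j ∈ S, ∏ ℓ ∈ Sᶜ, ((a ℓ) ^ 2 - (a j) ^ 2))) * Δf =
        lapTerm e₀ Mm S := by
    intro S hSmem
    have hS : S.card = n := Finset.mem_powersetCard_univ.mp hSmem
    have hSc : Sᶜ.card = n + 2 := by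
      rw [Finset.card_compl, hS, Fintype.card_fin]; omega
    set emb := S.orderEmbOfFin hS with hemb
    set embc := (Sᶜ : Finset (Fin (2 * n + 2))).orderEmbOfFin hSc with hembc
    set ρ := shuffle e₀ S hS hSc with hρ
    have hρl : ∀ i, ρ (e₀ (Sum.inl i)) = emb i := fun i => shuffle_apply_inl e₀ S hS hSc i
    have hρr : ∀ i, ρ (e₀ (Sum.inr i)) = embc i := fun i => shuffle_apply_inr e₀ S hS hSc i
    have hll : ∀ i j : Fin n, e₀ (Sum.inl i) < e₀ (Sum.inl j) ↔ i < j := by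
      intro i j; rw [Fin.lt_def, Fin.lt_def, hel, hel]
    have hrr : ∀ i j : Fin (n + 2), e₀ (Sum.inr i) < e₀ (Sum.inr j) ↔ i < j := by
      intro i j; rw [Fin.lt_def, Fin.lt_def, her, her]; omega
    have hlr : ∀ (i : Fin n) (j : Fin (n + 2)), e₀ (Sum.inl i) < e₀ (Sum.inr j) := by
      intro i j; rw [Fin.lt_def, hel, her]; have := i.isLt; omega
    set WS : ℂ := ∏ i, ∏ j ∈ Ioi i, ((a (emb j)) ^ 2 - (a (emb i)) ^ 2) with hWS
    set WC : ℂ := ∏ i, ∏ j ∈ Ioi i, ((a (embc j)) ^ 2 - (a (embc i)) ^ 2) with hWC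
    set CR : ℂ := ∏ i : Fin n, ∏ j : Fin (n + 2), ((a (embc j)) ^ 2 - (a (emb i)) ^ 2)
      with hCR
    have hstar : ((Equiv.Perm.sign ρ : ℤ) : ℂ) * Δf = WS * WC * CR := by
      have hsplit := prod_pairs_split e₀ hll hrr hlr
        (fun i j => (a (ρ j)) ^ 2 - (a (ρ i)) ^ 2)
      have hperm := prod_pairs_perm ρ (fun x => (a x) ^ 2)
      simp only [hρl, hρr] at hsplit
      rw [hsplit] at hperm
      rw [← hperm]
      try ring
    have hCR_ne : CR ≠ 0 := by
      rw [hCR, Finset.prod_ne_zero_iff]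
      intro i _
      rw [Finset.prod_ne_zero_iff]
      intro j _
      apply sub_ne_zero_of_ne
      apply hsq
      intro hcon
      have h1 : embc j ∈ Sᶜ := Finset.orderEmbOfFin_mem _ _ _
      have h2 : emb i ∈ S := Finset.orderEmbOfFin_mem _ _ _
      rw [hcon] at h1
      exact (Finset.mem_compl.mp h1) h2
    have hnum : (∏ j ∈ S, a j) = ∏ i, a (emb i) := (prod_emb S hS a).symm
    have hden : (∏ j ∈ S, ∏ ℓ ∈ Sᶜ, ((a ℓ) ^ 2 - (a j) ^ 2)) = CR := by
      rw [hCR, ← prod_emb S hS (fun j => ∏ ℓ ∈ Sᶜ, ((a ℓ) ^ 2 - (a j) ^ 2))]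
      apply Finset.prod_congr rfl
      intro i _
      rw [← prod_emb (Sᶜ : Finset (Fin (2 * n + 2))) hSc
        (fun ℓ => (a ℓ) ^ 2 - (a (emb i)) ^ 2)]
    have hlapS : lapTerm e₀ Mm S =
        ((Equiv.Perm.sign ρ : ℤ) : ℂ) * (((∏ i, a (emb i)) * WS) * WC) := by
      rw [lapTerm, dif_pos ⟨hS, hSc⟩]
      congr 1
      congr 1
      · have h1 : (Matrix.of fun (i : Fin n) (j : Fin n) =>
            Mm (S.orderEmbOfFin hS i) (e₀ (Sum.inl j))) =
            Matrix.of fun (i : Fin n) (j : Fin n) => (a (emb i)) ^ (2 * (j : ℕ) + 1) := by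
          ext i j
          simp only [Matrix.of_apply, hMm, hemb]
          rw [hEl j]
        rw [h1, det_odd_vandermonde]
      · have h2 : (Matrix.of fun (i : Fin (n + 2)) (j : Fin (n + 2)) =>
            Mm ((Sᶜ : Finset (Fin (2 * n + 2))).orderEmbOfFin hSc i) (e₀ (Sum.inr j))) =
            Matrix.of fun (i : Fin (n + 2)) (j : Fin (n + 2)) =>
              (a (embc i)) ^ (2 * (j : ℕ)) := by
          ext i j
          simp only [Matrix.of_apply, hMm, hembc]
          rw [hEr j]
        rw [h2, det_even_vandermonde]
    have hsgn2 : ((Equiv.Perm.sign ρ : ℤ) : ℂ) * ((Equiv.Perm.sign ρ : ℤ) : ℂ) = 1 := by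
      have := Int.units_mul_self (Equiv.Perm.sign ρ)
      have h := congrArg (fun z : ℤˣ => ((z : ℤ) : ℂ)) this
      push_cast at h
      exact h
    have hΔf_eq : Δf = ((Equiv.Perm.sign ρ : ℤ) : ℂ) * (WS * WC * CR) := by
      rw [← hstar, ← mul_assoc, hsgn2, one_mul]
    rw [hnum, hden, hlapS, hΔf_eq]
    field_simp
  -- sum it up
  have hsum_eq : (∑ S ∈ powersetCard n (univ : Finset (Fin (2 * n + 2))),
      (∏ j ∈ S, a j) / (∏ j ∈ S, ∏ ℓ ∈ Sᶜ, ((a ℓ) ^ 2 - (a j) ^ 2))) * Δf = Mm.det := by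
    rw [hlap, Finset.sum_mul]
    exact Finset.sum_congr rfl hterm
  have key2 : (∑ S ∈ powersetCard n (univ : Finset (Fin (2 * n + 2))),
      (∏ j ∈ S, a j) / (∏ j ∈ S, ∏ ℓ ∈ Sᶜ, ((a ℓ) ^ 2 - (a j) ^ 2))) =
      ((-1 : ℂ) ^ B * ((∑ i, a i) * Δ)) / (Δ * P2) := by
    rw [eq_div_iff (mul_ne_zero hΔ_ne hP2_ne), ← hΔf_split, hsum_eq, hNdet]
  have hPgoal : (∏ p ∈ Finset.univ.filter
      (fun p : Fin (2 * n + 2) × Fin (2 * n + 2) => p.1 < p.2), (a p.1 + a p.2)) = P2 := by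
    rw [prod_pairs_filter (fun i j => a i + a j), hP2]
    apply Finset.prod_congr rfl
    intro i _
    exact Finset.prod_congr rfl fun j _ => add_comm _ _
  have hAB : B = n * (n - 1) / 2 + n := by
    obtain ⟨m', rfl⟩ : ∃ m', n = m' + 1 := ⟨n - 1, by omega⟩
    rw [hB]
    have h1 : (m' + 1) * ((m' + 1) + 1) = (m' + 1) * ((m' + 1) - 1) + 2 * (m' + 1) := by
      simp
      ring
    rw [h1]
    rw [show (2 : ℕ) * (m' + 1) = 2 * (m' + 1) from rfl]
    rw [show (m' + 1) * ((m' + 1) - 1) + 2 * (m' + 1) =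
      (m' + 1) * ((m' + 1) - 1) + 2 * (m' + 1) from rfl]
    rw [Nat.add_mul_div_left _ _ (by omega : (0:ℕ) < 2)]
  have hsigns : (-1 : ℂ) ^ (n * (n - 1) / 2) * (-1 : ℂ) ^ B = (-1 : ℂ) ^ n := by
    rw [hAB, pow_add, ← mul_assoc, ← pow_add]
    have heven : Even (n * (n - 1) / 2 + n * (n - 1) / 2) := ⟨n * (n - 1) / 2, by ring⟩
    rw [heven.neg_one_pow, one_mul]
  rw [key2, hPgoal]
  rw [show (-1 : ℂ) ^ (n * (n - 1) / 2) *
      ((-1 : ℂ) ^ B * ((∑ i : Fin (2 * n + 2), a i) * Δ) / (Δ * P2)) =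
      (((-1 : ℂ) ^ (n * (n - 1) / 2) * (-1 : ℂ) ^ B) * (∑ i : Fin (2 * n + 2), a i)) / P2
    from by field_simp [hΔ_ne, hP2_ne]]
  rw [hsigns]
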